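/- Let q : ℕ → [1,∞] be arbitrary. Then there exists p ∈ [1,∞] such that for every ε > 0 there is a strictly increasing sequence (n_k) of positive integers with the property that the placement map φ — sending y to the sequence with y₁ at coordinate n₁, y_{k+1} at coordinate n_k + 1 for k ≥ 1, and zero elsewhere — satisfies (1+ε)^{-1}·‖y‖_{ℓ^p} ≤ Φ_q(φ(y)) ≤ (1+ε)·‖y‖_{ℓ^p} for every y ∈ ℓ^p (where ‖·‖_{ℓ^∞} is the supremum norm when p = ∞). That is, every space ℓ^{q(·)} contains some classical space ℓ^p almost isometrically. -/

import Mathlib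

open scoped ENNReal

/-- `t ⊞_p s`: for `p < ∞`, `(t^p + s^p)^(1/p)`; for `p = ∞`, `max t s`. -/
noncomputable def boxPlus (p : ℝ≥0∞) (t s : ℝ) : ℝ :=
  if p = ∞ then max t s else (t ^ p.toReal + s ^ p.toReal) ^ (1 / p.toReal)

/-- The recursively defined seminorms `|||x|||_(k)` (0-indexed). -/
noncomputable def seqNorm (p : ℕ → ℝ≥0∞) (x : ℕ → ℝ) : ℕ → ℝ
  | 0 => boxPlus (p 0) |x 0| |x 1|
  | k + 1 => boxPlus (p (k + 1)) (seqNorm p x k) |x (k + 2)|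

/-- `Φ_p(x) = lim_k |||x|||_(k)`, as the supremum of the nondecreasing sequence. -/
noncomputable def Phi (p : ℕ → ℝ≥0∞) (x : ℕ → ℝ) : ℝ≥0∞ :=
  ⨆ k, ENNReal.ofReal (seqNorm p x k)

/-- `x` is a bounded real sequence, i.e. `x ∈ ℓ^∞`. -/
def IsBddSeq (x : ℕ → ℝ) : Prop := ∃ M : ℝ, ∀ n, |x n| ≤ M

/-- Membership in the variable exponent space `ℓ^{p(·)}`. -/
def MemVLp (p : ℕ → ℝ≥0∞) (x : ℕ → ℝ) : Prop := IsBddSeq x ∧ Phi p x < ⊤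

open scoped Classical in
/-- The placement map: `(place n y) (n 0) = y 0`, `(place n y) (n k + 1) = y (k+1)`,
and all other coordinates vanish. -/
noncomputable def place (n : ℕ → ℕ) (y : ℕ → ℝ) : ℕ → ℝ := fun j =>
  if j = n 0 then y 0
  else if h : ∃ k, j = n k + 1 then y (h.choose + 1)
  else 0

/-- The classical `ℓ^p` norm for `p ∈ [1,∞]`, valued in `[0,∞]`:
`(∑ₙ |yₙ|^p)^{1/p}` for `p < ∞`, and `supₙ |yₙ|` for `p = ∞`. -/
noncomputable def lpNormE (p : ℝ≥0∞) (y : ℕ → ℝ) : ℝ≥0∞ :=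
  if p = ⊤ then ⨆ n, ENNReal.ofReal |y n|
  else (∑' n, ENNReal.ofReal (|y n| ^ p.toReal)) ^ (1 / p.toReal)

open scoped NNReal

/-- reciprocal exponent in `[0,1]` -/
noncomputable def ipE (p : ℝ≥0∞) : ℝ := if p = ∞ then 0 else 1 / p.toReal

lemma one_le_toReal {p : ℝ≥0∞} (hp : 1 ≤ p) (h : p ≠ ∞) : 1 ≤ p.toReal := by
  rw [← ENNReal.toReal_one]; exact ENNReal.toReal_mono h hp

lemma ipE_nonneg {p : ℝ≥0∞} (hp : 1 ≤ p) : 0 ≤ ipE p := by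
  unfold ipE; split
  · exact le_refl 0
  · positivity

lemma ipE_le_one {p : ℝ≥0∞} (hp : 1 ≤ p) : ipE p ≤ 1 := by
  unfold ipE; split
  · norm_num
  · rename_i h
    have := one_le_toReal hp h
    rw [div_le_one (by linarith)]; linarith

lemma boxPlus_nonneg {p : ℝ≥0∞} {t s : ℝ} (ht : 0 ≤ t) (hs : 0 ≤ s) :
    0 ≤ boxPlus p t s := by
  unfold boxPlus; split
  · exact le_max_of_le_left ht
  · positivity

lemma boxPlus_mono {p : ℝ≥0∞} {t s t' s' : ℝ} (hp : 1 ≤ p) (ht : 0 ≤ t) (hs : 0 ≤ s)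
    (h1 : t ≤ t') (h2 : s ≤ s') : boxPlus p t s ≤ boxPlus p t' s' := by
  unfold boxPlus; split
  · exact max_le_max h1 h2
  · rename_i h
    have ha := one_le_toReal hp h
    apply Real.rpow_le_rpow (by positivity)
    · exact add_le_add (Real.rpow_le_rpow ht h1 (by linarith))
        (Real.rpow_le_rpow hs h2 (by linarith))
    · positivity

lemma boxPlus_zero_right {p : ℝ≥0∞} {t : ℝ} (hp : 1 ≤ p) (ht : 0 ≤ t) :
    boxPlus p t 0 = t := by
  unfold boxPlus; split
  · exact max_eq_left ht
  · rename_i h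
    have ha := one_le_toReal hp h
    have ha0 : p.toReal ≠ 0 := by linarith
    rw [Real.zero_rpow ha0, add_zero, ← Real.rpow_mul ht, mul_one_div, div_self ha0,
      Real.rpow_one]

lemma le_boxPlus_left {p : ℝ≥0∞} {t s : ℝ} (hp : 1 ≤ p) (ht : 0 ≤ t) (hs : 0 ≤ s) :
    t ≤ boxPlus p t s := by
  calc t = boxPlus p t 0 := (boxPlus_zero_right hp ht).symm
  _ ≤ boxPlus p t s := boxPlus_mono hp ht le_rfl le_rfl hs

lemma boxPlus_zero_left {p : ℝ≥0∞} {s : ℝ} (hp : 1 ≤ p) (hs : 0 ≤ s) :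
    boxPlus p 0 s = s := by
  unfold boxPlus; split
  · exact max_eq_right hs
  · rename_i h
    have ha := one_le_toReal hp h
    have ha0 : p.toReal ≠ 0 := by linarith
    rw [Real.zero_rpow ha0, zero_add, ← Real.rpow_mul hs, mul_one_div, div_self ha0,
      Real.rpow_one]

lemma le_boxPlus_right {p : ℝ≥0∞} {t s : ℝ} (hp : 1 ≤ p) (ht : 0 ≤ t) (hs : 0 ≤ s) :
    s ≤ boxPlus p t s := by
  calc s = boxPlus p 0 s := (boxPlus_zero_left hp hs).symm
  _ ≤ boxPlus p t s := boxPlus_mono hp le_rfl hs ht le_rfl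

lemma boxPlus_smul {p : ℝ≥0∞} {c t s : ℝ} (hp : 1 ≤ p) (hc : 0 ≤ c) (ht : 0 ≤ t) (hs : 0 ≤ s) :
    boxPlus p (c * t) (c * s) = c * boxPlus p t s := by
  unfold boxPlus; split
  · exact (mul_max_of_nonneg _ _ hc).symm
  · rename_i h
    have ha := one_le_toReal hp h
    have ha0 : p.toReal ≠ 0 := by linarith
    rw [Real.mul_rpow hc ht, Real.mul_rpow hc hs, ← mul_add,
      Real.mul_rpow (by positivity) (by positivity), ← Real.rpow_mul hc, mul_one_div,
      div_self ha0, Real.rpow_one]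

lemma boxPlus_mul_left_le {p : ℝ≥0∞} {c t s : ℝ} (hp : 1 ≤ p) (hc : 1 ≤ c) (ht : 0 ≤ t)
    (hs : 0 ≤ s) : boxPlus p (c * t) s ≤ c * boxPlus p t s := by
  rw [← boxPlus_smul hp (by linarith) ht hs]
  exact boxPlus_mono hp (by positivity) hs le_rfl (le_mul_of_one_le_left hs hc)

lemma rev_ineq {p q : ℝ} (a b : ℝ≥0) (hp : 0 < p) (hpq : p ≤ q) :
    (a ^ p + b ^ p) ^ (1/p) ≤ 2 ^ (1/p - 1/q) * (a ^ q + b ^ q) ^ (1/q) := by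
  have hq : 0 < q := hp.trans_le hpq
  have hθ : 1 ≤ q / p := (one_le_div hp).2 hpq
  have h := NNReal.rpow_arith_mean_le_arith_mean2_rpow (1/2) (1/2) (a^p) (b^p) (by rw [← two_mul, one_div]; exact mul_inv_cancel₀ (two_ne_zero (α := ℝ≥0))) hθ
  have e1 : ((a:ℝ≥0) ^ p) ^ (q/p) = a ^ q := by
    rw [← NNReal.rpow_mul]; congr 1; field_simp
  have e2 : ((b:ℝ≥0) ^ p) ^ (q/p) = b ^ q := by
    rw [← NNReal.rpow_mul]; congr 1; field_simp
  rw [e1, e2] at h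
  have h2 : (((1:ℝ≥0)/2 * a ^ p + 1/2 * b ^ p) ^ (q/p)) ^ (1/q)
      ≤ ((1:ℝ≥0)/2 * a ^ q + 1/2 * b ^ q) ^ (1/q) := NNReal.rpow_le_rpow h (by positivity)
  rw [← NNReal.rpow_mul] at h2
  have e3 : q / p * (1/q) = 1/p := by field_simp
  rw [e3] at h2
  have hA : a ^ p + b ^ p = 2 * ((1:ℝ≥0)/2 * a^p + 1/2 * b^p) := by
    rw [mul_add, ← mul_assoc, ← mul_assoc, mul_one_div_cancel (two_ne_zero), one_mul, one_mul]
  have hB : a ^ q + b ^ q = 2 * ((1:ℝ≥0)/2 * a^q + 1/2 * b^q) := by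
    rw [mul_add, ← mul_assoc, ← mul_assoc, mul_one_div_cancel (two_ne_zero), one_mul, one_mul]
  rw [hA, hB, NNReal.mul_rpow, NNReal.mul_rpow]
  calc (2:ℝ≥0)^(1/p) * ((1:ℝ≥0)/2 * a^p + 1/2 * b^p)^(1/p)
      ≤ (2:ℝ≥0)^(1/p) * ((1:ℝ≥0)/2 * a^q + 1/2 * b^q)^(1/q) := mul_le_mul_right h2 _
    _ = 2 ^ (1/p - 1/q) * ((2:ℝ≥0) ^ (1/q) * ((1:ℝ≥0)/2 * a^q + 1/2 * b^q)^(1/q)) := by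
        rw [← mul_assoc, ← NNReal.rpow_add two_ne_zero, sub_add_cancel]


lemma real_rev {p q : ℝ} {a b : ℝ} (ha : 0 ≤ a) (hb : 0 ≤ b) (hp : 0 < p) (hpq : p ≤ q) :
    (a ^ p + b ^ p) ^ (1/p) ≤ 2 ^ (1/p - 1/q) * (a ^ q + b ^ q) ^ (1/q) := by
  have h := rev_ineq a.toNNReal b.toNNReal hp hpq
  rw [← NNReal.coe_le_coe] at h
  push_cast at h
  rwa [Real.coe_toNNReal a ha, Real.coe_toNNReal b hb] at h

lemma real_mono {p q : ℝ} {a b : ℝ} (ha : 0 ≤ a) (hb : 0 ≤ b) (hp : 0 < p) (hpq : p ≤ q) :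
    (a ^ q + b ^ q) ^ (1/q) ≤ (a ^ p + b ^ p) ^ (1/p) := by
  have h := NNReal.rpow_add_rpow_le a.toNNReal b.toNNReal hp hpq
  rw [← NNReal.coe_le_coe] at h
  push_cast at h
  rwa [Real.coe_toNNReal a ha, Real.coe_toNNReal b hb] at h

lemma boxPlus_top {a b : ℝ} : boxPlus ∞ a b = max a b := if_pos rfl

lemma boxPlus_ne_top {p : ℝ≥0∞} (h : p ≠ ∞) {a b : ℝ} :
    boxPlus p a b = (a ^ p.toReal + b ^ p.toReal) ^ (1/p.toReal) := if_neg h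

lemma ipE_eq {p : ℝ≥0∞} (h : p ≠ ∞) : ipE p = 1 / p.toReal := if_neg h

lemma ipE_top : ipE ∞ = 0 := if_pos rfl

lemma boxPlus_comp {p r : ℝ≥0∞} (hp : 1 ≤ p) (hr : 1 ≤ r) {a b : ℝ} (ha : 0 ≤ a) (hb : 0 ≤ b) :
    boxPlus r a b ≤ 2 ^ |ipE r - ipE p| * boxPlus p a b := by
  have h2 : (1:ℝ) ≤ 2 ^ |ipE r - ipE p| := by
    calc (1:ℝ) = 2 ^ (0:ℝ) := (Real.rpow_zero 2).symm
    _ ≤ _ := Real.rpow_le_rpow_of_exponent_le one_le_two (abs_nonneg _)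
  by_cases hrT : r = ∞
  · subst hrT
    rw [boxPlus_top]
    calc max a b ≤ boxPlus p a b := max_le (le_boxPlus_left hp ha hb) (le_boxPlus_right hp ha hb)
    _ ≤ 2 ^ |ipE ⊤ - ipE p| * boxPlus p a b :=
        le_mul_of_one_le_left (boxPlus_nonneg ha hb) h2
  · have hrt1 : 1 ≤ r.toReal := one_le_toReal hr hrT
    have hrt0 : 0 < r.toReal := lt_of_lt_of_le one_pos hrt1
    by_cases hpT : p = ∞
    · subst hpT
      set M := max a b with hMdef
      have hM : 0 ≤ M := le_max_of_le_left ha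
      rw [boxPlus_top, ipE_top, sub_zero, abs_of_nonneg (by rw [ipE_eq hrT]; positivity),
        ipE_eq hrT, boxPlus_ne_top hrT]
      calc (a ^ r.toReal + b ^ r.toReal) ^ (1/r.toReal)
          ≤ (M ^ r.toReal + M ^ r.toReal) ^ (1/r.toReal) := by
            apply Real.rpow_le_rpow (by positivity)
              (add_le_add (Real.rpow_le_rpow ha (le_max_left _ _) hrt0.le)
                (Real.rpow_le_rpow hb (le_max_right _ _) hrt0.le)) (by positivity)
        _ = (2 * M ^ r.toReal) ^ (1/r.toReal) := by rw [two_mul]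
        _ = 2 ^ (1/r.toReal) * M := by
            rw [Real.mul_rpow (by norm_num) (by positivity), ← Real.rpow_mul hM,
              mul_one_div, div_self hrt0.ne', Real.rpow_one]
    · have hpt1 : 1 ≤ p.toReal := one_le_toReal hp hpT
      have hpt0 : 0 < p.toReal := lt_of_lt_of_le one_pos hpt1
      rw [ipE_eq hrT, ipE_eq hpT, boxPlus_ne_top hrT, boxPlus_ne_top hpT]
      rcases le_total (1/r.toReal) (1/p.toReal) with h | h
      · have hle : p.toReal ≤ r.toReal := le_of_one_div_le_one_div hrt0 h
        calc (a ^ r.toReal + b ^ r.toReal) ^ (1/r.toReal)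
            ≤ (a ^ p.toReal + b ^ p.toReal) ^ (1/p.toReal) := real_mono ha hb hpt0 hle
          _ ≤ _ := le_mul_of_one_le_left (by positivity)
              (by rw [← ipE_eq hrT, ← ipE_eq hpT]; exact h2)
      · have hle : r.toReal ≤ p.toReal := le_of_one_div_le_one_div hpt0 h
        rw [abs_of_nonneg (sub_nonneg.2 h)]
        exact real_rev ha hb hrt0 hle

/-- The iterated boxPlus of `|y 0|, ..., |y K|` with exponent sequence `e`. -/
noncomputable def recPlus (e : ℕ → ℝ≥0∞) (y : ℕ → ℝ) : ℕ → ℝ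
  | 0 => |y 0|
  | K + 1 => boxPlus (e K) (recPlus e y K) |y (K + 1)|

lemma recPlus_nonneg (e : ℕ → ℝ≥0∞) (y : ℕ → ℝ) (K : ℕ) : 0 ≤ recPlus e y K := by
  cases K with
  | zero => exact abs_nonneg _
  | succ K => exact boxPlus_nonneg (recPlus_nonneg e y K) (abs_nonneg _)

lemma recPlus_mono (e : ℕ → ℝ≥0∞) (he : ∀ k, 1 ≤ e k) (y : ℕ → ℝ) (K : ℕ) :
    recPlus e y K ≤ recPlus e y (K + 1) :=
  le_boxPlus_left (he K) (recPlus_nonneg e y K) (abs_nonneg _)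

lemma abs_le_recPlus (e : ℕ → ℝ≥0∞) (he : ∀ k, 1 ≤ e k) (y : ℕ → ℝ) :
    ∀ K i, i ≤ K → |y i| ≤ recPlus e y K := by
  intro K
  induction K with
  | zero => intro i hi; interval_cases i; exact le_rfl
  | succ K ih =>
    intro i hi
    rcases Nat.le_succ_iff.mp hi with h | h
    · exact (ih i h).trans (recPlus_mono e he y K)
    · subst h
      exact le_boxPlus_right (he K) (recPlus_nonneg e y K) (abs_nonneg _)

/-- Comparison of two `recPlus` recursions with pointwise-close exponent sequences. -/
lemma recPlus_comp (e f : ℕ → ℝ≥0∞) (he : ∀ k, 1 ≤ e k) (hf : ∀ k, 1 ≤ f k)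
    (d : ℕ → ℝ) (hd : ∀ k, |ipE (e k) - ipE (f k)| ≤ d k) (y : ℕ → ℝ) :
    ∀ K, recPlus e y K ≤ 2 ^ (∑ k ∈ Finset.range K, d k) * recPlus f y K := by
  have hdnn : ∀ k, 0 ≤ d k := fun k => (abs_nonneg _).trans (hd k)
  intro K
  induction K with
  | zero => simp [recPlus]
  | succ K ih =>
    have hWnn : 0 ≤ ∑ k ∈ Finset.range K, d k := Finset.sum_nonneg fun k _ => hdnn k
    have h1 : (1:ℝ) ≤ 2 ^ (∑ k ∈ Finset.range K, d k) := by
      calc (1:ℝ) = 2 ^ (0:ℝ) := (Real.rpow_zero 2).symm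
      _ ≤ _ := Real.rpow_le_rpow_of_exponent_le one_le_two hWnn
    calc recPlus e y (K+1) = boxPlus (e K) (recPlus e y K) |y (K+1)| := rfl
      _ ≤ 2 ^ |ipE (e K) - ipE (f K)| * boxPlus (f K) (recPlus e y K) |y (K+1)| :=
          boxPlus_comp (hf K) (he K) (recPlus_nonneg e y K) (abs_nonneg _)
      _ ≤ 2 ^ (d K) * boxPlus (f K) (2 ^ (∑ k ∈ Finset.range K, d k) * recPlus f y K) |y (K+1)| := by
          apply mul_le_mul
          · exact Real.rpow_le_rpow_of_exponent_le one_le_two (hd K)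
          · exact boxPlus_mono (hf K) (recPlus_nonneg e y K) (abs_nonneg _) ih le_rfl
          · exact boxPlus_nonneg (recPlus_nonneg e y K) (abs_nonneg _)
          · positivity
      _ ≤ 2 ^ (d K) * (2 ^ (∑ k ∈ Finset.range K, d k) *
            boxPlus (f K) (recPlus f y K) |y (K+1)|) := by
          apply mul_le_mul_of_nonneg_left _ (by positivity)
          exact boxPlus_mul_left_le (hf K) h1 (recPlus_nonneg f y K) (abs_nonneg _)
      _ = 2 ^ (∑ k ∈ Finset.range (K+1), d k) * recPlus f y (K+1) := by
          rw [Finset.sum_range_succ, Real.rpow_add two_pos, ← mul_assoc, mul_comm (2 ^ d K)]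
          rfl

section Place

variable {n : ℕ → ℕ} {y : ℕ → ℝ}

lemma place_n0 (n : ℕ → ℕ) (y : ℕ → ℝ) : place n y (n 0) = y 0 := by
  rw [place]; simp

lemma place_succ (hn : StrictMono n) (y : ℕ → ℝ) (k : ℕ) :
    place n y (n k + 1) = y (k + 1) := by
  have h0 : n 0 ≤ n k := hn.monotone (Nat.zero_le k)
  rw [place]
  split_ifs with h1 h2
  · omega
  · congr 1
    have hs := h2.choose_spec
    have : h2.choose = k := hn.injective (by omega)
    omega
  · exact absurd ⟨k, rfl⟩ h2

lemma place_zero (hn : StrictMono n) (y : ℕ → ℝ) {j : ℕ} (h1 : j ≠ n 0)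
    (h2 : ∀ k, j ≠ n k + 1) : place n y j = 0 := by
  rw [place]
  split_ifs with g1 g2
  · exact absurd g1 h1
  · exact absurd g2.choose_spec (h2 _)
  · rfl

end Place

section Block

variable {q : ℕ → ℝ≥0∞} {n : ℕ → ℕ} {y : ℕ → ℝ}

lemma seqNorm_zero (q : ℕ → ℝ≥0∞) (x : ℕ → ℝ) :
    seqNorm q x 0 = boxPlus (q 0) |x 0| |x 1| := rfl

lemma seqNorm_succ (q : ℕ → ℝ≥0∞) (x : ℕ → ℝ) (k : ℕ) :
    seqNorm q x (k + 1) = boxPlus (q (k + 1)) (seqNorm q x k) |x (k + 2)| := rfl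

lemma seqNorm_prefix (hq : ∀ m, 1 ≤ q m) (hn : StrictMono n) :
    ∀ m, m + 1 < n 0 → seqNorm q (place n y) m = 0 := by
  have hz : ∀ j, j < n 0 → place n y j = 0 := by
    intro j hj
    apply place_zero hn y (by omega)
    intro k
    have : n 0 ≤ n k := hn.monotone (Nat.zero_le k)
    omega
  intro m
  induction m with
  | zero =>
    intro h
    rw [seqNorm_zero, hz 0 (by omega), hz 1 (by omega), abs_zero,
      boxPlus_zero_right (hq 0) le_rfl]
  | succ m ih =>
    intro h
    rw [seqNorm_succ, ih (by omega), hz (m+2) (by omega), abs_zero,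
      boxPlus_zero_right (hq _) le_rfl]

lemma seqNorm_pre0 (hq : ∀ m, 1 ≤ q m) (hn : StrictMono n) :
    ∀ m, m + 1 = n 0 → seqNorm q (place n y) m = |y 0| := by
  intro m h
  cases m with
  | zero =>
    have h0 : place n y 0 = 0 := by
      apply place_zero hn y (by omega)
      intro k; omega
    have e1 : place n y 1 = y 0 := by
      rw [show (1:ℕ) = n 0 from by omega]; exact place_n0 n y
    rw [seqNorm_zero, h0, e1, abs_zero, boxPlus_zero_left (hq 0) (abs_nonneg _)]
  | succ m =>
    have e1 : place n y (m + 2) = y 0 := by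
      rw [show m + 2 = n 0 from by omega]; exact place_n0 n y
    rw [seqNorm_succ, seqNorm_prefix hq hn m (by omega), e1,
      boxPlus_zero_left (hq _) (abs_nonneg _)]

lemma seqNorm_block (hq : ∀ m, 1 ≤ q m) (hn : StrictMono n) :
    ∀ m K, n K ≤ m → m < n (K + 1) →
      seqNorm q (place n y) m = recPlus (fun k => q (n k)) y (K + 1) := by
  intro m
  induction m using Nat.strong_induction_on with
  | _ m IH =>
    intro K hKm hmK
    rcases Nat.lt_or_ge (n K) m with hlt | hge
    · -- m > n K : padding zero step
      obtain ⟨m', rfl⟩ : ∃ m', m = m' + 1 := ⟨m - 1, by omega⟩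
      have hx0 : place n y (m' + 2) = 0 := by
        apply place_zero hn y
        · have : n 0 ≤ n K := hn.monotone (Nat.zero_le K)
          omega
        · intro k h
          have hk1 : n K < n k := by omega
          have hk2 : n k < n (K + 1) := by omega
          have := hn.lt_iff_lt.mp hk1
          have := hn.lt_iff_lt.mp hk2
          omega
      rw [seqNorm_succ, hx0, abs_zero, IH m' (by omega) K (by omega) (by omega),
        boxPlus_zero_right (hq _) (recPlus_nonneg _ _ _)]
    · -- m = n K
      have hm : m = n K := le_antisymm hge hKm
      cases m with
      | zero =>
        have hK0 : K = 0 := by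
          have : K ≤ n K := hn.le_apply; omega
        subst hK0
        have hn0 : n 0 = 0 := hm.symm
        have e0 := place_n0 n y
        have e1 := place_succ hn y 0
        rw [hn0] at e0 e1
        norm_num at e1
        rw [seqNorm_zero, e0, e1]
        simp [recPlus, hn0]
      | succ m' =>
        have em : place n y (m' + 2) = y (K + 1) := by
          rw [show m' + 2 = n K + 1 from by omega]; exact place_succ hn y K
        cases K with
        | zero =>
          rw [seqNorm_succ, em, seqNorm_pre0 hq hn m' (by omega)]
          simp [recPlus, ← hm]
        | succ K' =>
          have hmm : m' + 1 = n (K' + 1) := hm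
          have hlt : n K' < n (K' + 1) := hn (Nat.lt_succ_self K')
          rw [seqNorm_succ, em, IH m' (by omega) K' (by omega) (by omega)]
          simp [recPlus, ← hmm]

end Block

lemma Phi_place {q : ℕ → ℝ≥0∞} {n : ℕ → ℕ} {y : ℕ → ℝ} (hq : ∀ m, 1 ≤ q m)
    (hn : StrictMono n) :
    Phi q (place n y) = ⨆ K, ENNReal.ofReal (recPlus (fun k => q (n k)) y K) := by
  apply le_antisymm
  · apply iSup_le; intro m
    rcases Nat.lt_or_ge m (n 0) with h | h
    · rcases Nat.lt_or_ge (m + 1) (n 0) with h1 | h1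
      · rw [seqNorm_prefix hq hn m h1]; simp
      · have hm : m + 1 = n 0 := by omega
        rw [seqNorm_pre0 hq hn m hm]
        exact le_iSup_of_le 0 le_rfl
    · have hex : ∃ K, n K ≤ m ∧ m < n (K + 1) := by
        by_contra hc
        push_neg at hc
        have hall : ∀ K, n K ≤ m := by
          intro K
          induction K with
          | zero => exact h
          | succ K ih => exact hc K ih
        have h1 := hall (m + 1)
        have h2 : m + 1 ≤ n (m + 1) := hn.le_apply
        omega
      obtain ⟨K, hPK, hK1⟩ := hex
      rw [seqNorm_block hq hn m K hPK hK1]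
      exact le_iSup_of_le (K + 1) le_rfl
  · apply iSup_le; intro K
    have h1 : recPlus (fun k => q (n k)) y K ≤ recPlus (fun k => q (n k)) y (K + 1) :=
      recPlus_mono _ (fun k => hq _) y K
    have h2 : seqNorm q (place n y) (n K) = recPlus (fun k => q (n k)) y (K + 1) :=
      seqNorm_block hq hn (n K) K le_rfl (hn (Nat.lt_succ_self K))
    exact le_iSup_of_le (n K) (ENNReal.ofReal_le_ofReal (h1.trans h2.ge))

lemma ofReal_recPlus_const {p : ℝ≥0∞} (hp : 1 ≤ p) (hpT : p ≠ ⊤) (y : ℕ → ℝ) :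
    ∀ K, ENNReal.ofReal (recPlus (fun _ => p) y K)
      = (∑ i ∈ Finset.range (K + 1), ENNReal.ofReal (|y i| ^ p.toReal)) ^ (1 / p.toReal) := by
  have ha1 : 1 ≤ p.toReal := one_le_toReal hp hpT
  have ha0 : 0 < p.toReal := lt_of_lt_of_le one_pos ha1
  intro K
  induction K with
  | zero =>
    rw [Finset.sum_range_one, ← ENNReal.ofReal_rpow_of_nonneg (abs_nonneg (y 0)) ha0.le,
      ← ENNReal.rpow_mul, mul_one_div, div_self ha0.ne', ENNReal.rpow_one]
    rfl
  | succ K ih =>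
    have hrp := recPlus_nonneg (fun _ => p) y K
    calc ENNReal.ofReal (recPlus (fun _ => p) y (K + 1))
        = ENNReal.ofReal ((recPlus (fun _ => p) y K ^ p.toReal
            + |y (K + 1)| ^ p.toReal) ^ (1 / p.toReal)) := by
          rw [show recPlus (fun _ => p) y (K + 1)
            = boxPlus p (recPlus (fun _ => p) y K) |y (K + 1)| from rfl, boxPlus_ne_top hpT]
      _ = (ENNReal.ofReal (recPlus (fun _ => p) y K ^ p.toReal
            + |y (K + 1)| ^ p.toReal)) ^ (1 / p.toReal) := by
          rw [← ENNReal.ofReal_rpow_of_nonneg (by positivity) (by positivity)]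
      _ = ((ENNReal.ofReal (recPlus (fun _ => p) y K)) ^ p.toReal
            + ENNReal.ofReal (|y (K + 1)| ^ p.toReal)) ^ (1 / p.toReal) := by
          rw [ENNReal.ofReal_add (by positivity) (by positivity),
            ← ENNReal.ofReal_rpow_of_nonneg hrp ha0.le]
      _ = (∑ i ∈ Finset.range (K + 2), ENNReal.ofReal (|y i| ^ p.toReal)) ^ (1 / p.toReal) := by
          rw [ih, ← ENNReal.rpow_mul, one_div_mul_cancel ha0.ne', ENNReal.rpow_one,
            ← Finset.sum_range_succ]

lemma lp_eq {p : ℝ≥0∞} (hp : 1 ≤ p) (y : ℕ → ℝ) :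
    lpNormE p y = ⨆ K, ENNReal.ofReal (recPlus (fun _ => p) y K) := by
  by_cases hpT : p = ⊤
  · subst hpT
    rw [lpNormE, if_pos rfl]
    apply le_antisymm
    · apply iSup_le; intro i
      exact le_iSup_of_le i (ENNReal.ofReal_le_ofReal
        (abs_le_recPlus _ (fun _ => le_top) y i i le_rfl))
    · apply iSup_le; intro K
      induction K with
      | zero => exact le_iSup_of_le 0 le_rfl
      | succ K ih =>
        rw [show recPlus (fun _ => (⊤:ℝ≥0∞)) y (K + 1)
          = max (recPlus (fun _ => (⊤:ℝ≥0∞)) y K) |y (K + 1)| from boxPlus_top]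
        rcases max_cases (recPlus (fun _ => (⊤:ℝ≥0∞)) y K) |y (K + 1)| with ⟨he, _⟩ | ⟨he, _⟩
        · rw [he]; exact ih
        · rw [he]; exact le_iSup_of_le (K + 1) le_rfl
  · have ha1 : 1 ≤ p.toReal := one_le_toReal hp hpT
    have ha0 : 0 < p.toReal := lt_of_lt_of_le one_pos ha1
    rw [lpNormE, if_neg hpT]
    simp only [ofReal_recPlus_const hp hpT y]
    rw [ENNReal.tsum_eq_iSup_nat' (Filter.tendsto_add_atTop_nat 1)]
    exact (OrderIso.map_iSup (ENNReal.orderIsoRpow (1 / p.toReal) (by positivity)) _).symm ▸ rfl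

lemma geom_tail_le_one : ∀ K : ℕ, ∑ k ∈ Finset.range K, ((1:ℝ)/2)^(k+1) ≤ 1 := by
  have h : ∀ K : ℕ, ∑ k ∈ Finset.range K, ((1:ℝ)/2)^(k+1) = 1 - (1/2)^K := by
    intro K
    induction K with
    | zero => simp
    | succ K ih => rw [Finset.sum_range_succ, ih]; ring
  intro K
  rw [h K]
  have : (0:ℝ) ≤ (1/2)^K := by positivity
  linarith


lemma main_eps (q : ℕ → ℝ≥0∞) (hq : ∀ m, 1 ≤ q m) (u : ℕ → ℝ) (hu : u = fun m => ipE (q m))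
    (φ : ℕ → ℕ) (hφ : StrictMono φ) {c : ℝ}
    (hconv : Filter.Tendsto (u ∘ φ) Filter.atTop (nhds c))
    (p : ℝ≥0∞) (hp1 : 1 ≤ p) (hip : ipE p = c) :
    ∀ ε : ℝ, 0 < ε → ∃ n : ℕ → ℕ, StrictMono n ∧ ∀ y : ℕ → ℝ, lpNormE p y ≠ ⊤ →
        (ENNReal.ofReal (1 + ε))⁻¹ * lpNormE p y ≤ Phi q (place n y) ∧
        Phi q (place n y) ≤ ENNReal.ofReal (1 + ε) * lpNormE p y := by
  intro ε hε
  set δ := Real.log (1 + ε) / Real.log 2 with hδdef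
  have hlog2 : 0 < Real.log 2 := Real.log_pos one_lt_two
  have hδ : 0 < δ := div_pos (Real.log_pos (by linarith)) hlog2
  have h2δ : (2:ℝ) ^ δ = 1 + ε := by
    rw [Real.rpow_def_of_pos two_pos, hδdef, mul_comm, div_mul_cancel₀ _ hlog2.ne',
      Real.exp_log (by linarith)]
  have hP : ∀ k : ℕ, ∀ᶠ j in Filter.atTop, |u (φ j) - c| ≤ δ * (1/2)^(k+1) := by
    intro k
    have hpos : 0 < δ * (1/2:ℝ)^(k+1) := by positivity
    obtain ⟨N, hN⟩ := Metric.tendsto_atTop.mp hconv _ hpos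
    refine Filter.eventually_atTop.2 ⟨N, fun j hj => ?_⟩
    have := hN j hj
    rw [Real.dist_eq] at this
    exact this.le
  obtain ⟨ψ, hψ, hψP⟩ := Filter.extraction_forall_of_eventually hP
  refine ⟨φ ∘ ψ, hφ.comp hψ, ?_⟩
  intro y _
  have he1 : ∀ k, 1 ≤ q ((φ ∘ ψ) k) := fun k => hq _
  have hd1 : ∀ k, |ipE (q ((φ ∘ ψ) k)) - ipE p| ≤ δ * (1/2)^(k+1) := by
    intro k
    have h := hψP k
    simp only [hu] at h
    simpa [hip] using h
  have hd2 : ∀ k, |ipE p - ipE (q ((φ ∘ ψ) k))| ≤ δ * (1/2)^(k+1) := by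
    intro k; rw [abs_sub_comm]; exact hd1 k
  have hWle : ∀ K, ∑ k ∈ Finset.range K, δ * ((1:ℝ)/2)^(k+1) ≤ δ := by
    intro K
    calc ∑ k ∈ Finset.range K, δ * ((1:ℝ)/2)^(k+1)
        = δ * ∑ k ∈ Finset.range K, ((1:ℝ)/2)^(k+1) := by rw [Finset.mul_sum]
      _ ≤ δ * 1 := mul_le_mul_of_nonneg_left (geom_tail_le_one K) hδ.le
      _ = δ := mul_one δ
  have hfac : ∀ K, (2:ℝ) ^ (∑ k ∈ Finset.range K, δ * ((1:ℝ)/2)^(k+1)) ≤ 1 + ε := by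
    intro K; rw [← h2δ]; exact Real.rpow_le_rpow_of_exponent_le one_le_two (hWle K)
  have hPS : ∀ K, recPlus (fun k => q ((φ ∘ ψ) k)) y K
      ≤ (1 + ε) * recPlus (fun _ => p) y K := fun K =>
    (recPlus_comp _ (fun _ => p) he1 (fun _ => hp1) _ hd1 y K).trans
      (mul_le_mul_of_nonneg_right (hfac K) (recPlus_nonneg _ _ _))
  have hSP : ∀ K, recPlus (fun _ => p) y K
      ≤ (1 + ε) * recPlus (fun k => q ((φ ∘ ψ) k)) y K := fun K =>
    (recPlus_comp (fun _ => p) _ (fun _ => hp1) he1 _ hd2 y K).trans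
      (mul_le_mul_of_nonneg_right (hfac K) (recPlus_nonneg _ _ _))
  rw [Phi_place hq (hφ.comp hψ), lp_eq hp1 y]
  have hup : (⨆ K, ENNReal.ofReal (recPlus (fun k => q ((φ ∘ ψ) k)) y K))
      ≤ ENNReal.ofReal (1 + ε) * ⨆ K, ENNReal.ofReal (recPlus (fun _ => p) y K) := by
    apply iSup_le; intro K
    calc ENNReal.ofReal (recPlus (fun k => q ((φ ∘ ψ) k)) y K)
        ≤ ENNReal.ofReal ((1 + ε) * recPlus (fun _ => p) y K) :=
          ENNReal.ofReal_le_ofReal (hPS K)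
      _ = ENNReal.ofReal (1 + ε) * ENNReal.ofReal (recPlus (fun _ => p) y K) :=
          ENNReal.ofReal_mul (by linarith)
      _ ≤ _ := mul_le_mul_right
          (le_iSup (fun K => ENNReal.ofReal (recPlus (fun _ => p) y K)) K) _
  have hdown : (⨆ K, ENNReal.ofReal (recPlus (fun _ => p) y K))
      ≤ ENNReal.ofReal (1 + ε) * ⨆ K, ENNReal.ofReal (recPlus (fun k => q ((φ ∘ ψ) k)) y K) := by
    apply iSup_le; intro K
    calc ENNReal.ofReal (recPlus (fun _ => p) y K)
        ≤ ENNReal.ofReal ((1 + ε) * recPlus (fun k => q ((φ ∘ ψ) k)) y K) :=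
          ENNReal.ofReal_le_ofReal (hSP K)
      _ = ENNReal.ofReal (1 + ε) * ENNReal.ofReal (recPlus (fun k => q ((φ ∘ ψ) k)) y K) :=
          ENNReal.ofReal_mul (by linarith)
      _ ≤ _ := mul_le_mul_right
          (le_iSup (fun K => ENNReal.ofReal (recPlus (fun k => q ((φ ∘ ψ) k)) y K)) K) _
  have hne0 : ENNReal.ofReal (1 + ε) ≠ 0 := by
    simp only [ne_eq, ENNReal.ofReal_eq_zero, not_le]; linarith
  constructor
  · calc (ENNReal.ofReal (1 + ε))⁻¹ * (⨆ K, ENNReal.ofReal (recPlus (fun _ => p) y K))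
        ≤ (ENNReal.ofReal (1 + ε))⁻¹ * (ENNReal.ofReal (1 + ε)
            * ⨆ K, ENNReal.ofReal (recPlus (fun k => q ((φ ∘ ψ) k)) y K)) :=
          mul_le_mul_right hdown _
      _ = ⨆ K, ENNReal.ofReal (recPlus (fun k => q ((φ ∘ ψ) k)) y K) := by
          rw [← mul_assoc, ENNReal.inv_mul_cancel hne0 ENNReal.ofReal_ne_top, one_mul]
  · exact hup

/-- Every space `ℓ^{q(·)}` contains some classical space `ℓ^p`, `p ∈ [1,∞]`,
almost isometrically via placement maps. -/
theorem contains_classical_lp (q : ℕ → ℝ≥0∞) (hq : ∀ m, 1 ≤ q m) :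
    ∃ p : ℝ≥0∞, 1 ≤ p ∧ ∀ ε : ℝ, 0 < ε →
      ∃ n : ℕ → ℕ, StrictMono n ∧ ∀ y : ℕ → ℝ, lpNormE p y ≠ ⊤ →
        (ENNReal.ofReal (1 + ε))⁻¹ * lpNormE p y ≤ Phi q (place n y) ∧
        Phi q (place n y) ≤ ENNReal.ofReal (1 + ε) * lpNormE p y := by
  set u : ℕ → ℝ := fun m => ipE (q m) with hu
  obtain ⟨c, hc, φ, hφ, hconv⟩ := (isCompact_Icc (a := (0:ℝ)) (b := 1)).tendsto_subseq
    (x := u) (fun m => ⟨ipE_nonneg (hq m), ipE_le_one (hq m)⟩)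
  -- define the limiting exponent p
  by_cases hc0 : c = 0
  case pos =>
    refine ⟨⊤, le_top, ?_⟩
    subst hc0
    exact main_eps q hq u rfl φ hφ hconv ⊤ le_top ipE_top
  case neg =>
    have hcpos : 0 < c := lt_of_le_of_ne hc.1 (Ne.symm hc0)
    refine ⟨ENNReal.ofReal (1/c), ?_, ?_⟩
    · rw [ENNReal.one_le_ofReal]
      rw [le_div_iff₀ hcpos, one_mul]; exact hc.2
    · have hne : ENNReal.ofReal (1/c) ≠ ⊤ := ENNReal.ofReal_ne_top
      have h1p : 1 ≤ ENNReal.ofReal (1/c) := by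
        rw [ENNReal.one_le_ofReal, le_div_iff₀ hcpos, one_mul]; exact hc.2
      have hip : ipE (ENNReal.ofReal (1/c)) = c := by
        rw [ipE_eq hne, ENNReal.toReal_ofReal (by positivity), one_div_one_div]
      exact main_eps q hq u rfl φ hφ hconv _ h1p hip
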